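/- Fix finite nonempty sets Θ, Ω, A and a utility function u : Θ × Ω × A → ℝ. Then for every probability distribution μ on Ω × Θ that is a product distribution (μ(ω,θ) = μ(ω)·μ(θ) for all ω,θ) with μ(ω) > 0 for all ω, and every valid Pricing Mappings menu with revenue R, there exists a valid Pricing Mappings menu all of whose posteriors lie in the finite set Q*(u) and whose revenue is at least R. Moreover, if u takes only rational values, then every element of Q*(u) has rational coordinates. -/

import Mathlib

open Finset Filter

noncomputable section

variable {Θ Ω A : Type*}

/-- `p` is a probability distribution on the finite set `Ω`. -/
def IsDist [Fintype Ω] (p : Ω → ℝ) : Prop :=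
  (∀ ω, 0 ≤ p ω) ∧ ∑ ω, p ω = 1

/-- `μ` is a joint probability distribution on `Ω × Θ`. -/
def IsJoint [Fintype Ω] [Fintype Θ] (μ : Ω → Θ → ℝ) : Prop :=
  (∀ ω θ, 0 ≤ μ ω θ) ∧ ∑ ω, ∑ θ, μ ω θ = 1

/-- The marginal `μ(ω) = ∑_θ μ(ω,θ)` of a joint distribution. -/
def margO [Fintype Θ] (μ : Ω → Θ → ℝ) (ω : Ω) : ℝ := ∑ θ, μ ω θ

/-- The marginal `μ(θ) = ∑_ω μ(ω,θ)` of a joint distribution. -/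
def margT [Fintype Ω] (μ : Ω → Θ → ℝ) (θ : Θ) : ℝ := ∑ ω, μ ω θ

/-- The value function `v_θ(q) = max_{a ∈ A} ∑_ω q(ω)·u(θ,ω,a)`. -/
def vfun [Fintype Ω] [Fintype A] [Nonempty A] (u : Θ → Ω → A → ℝ) (θ : Θ) (q : Ω → ℝ) : ℝ :=
  univ.sup' univ_nonempty fun a => ∑ ω, q ω * u θ ω a

/-- The matrix-vector product `D_θ q`, where `D_θ` is the diagonal matrix with entries
`μ(θ|ω) = μ(ω,θ)/μ(ω)`. -/
def Dq [Fintype Θ] (μ : Ω → Θ → ℝ) (θ : Θ) (q : Ω → ℝ) : Ω → ℝ :=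
  fun ω => μ ω θ / margO μ ω * q ω

/-- `1ᵀ D_θ q`. -/
def onesD [Fintype Θ] [Fintype Ω] (μ : Ω → Θ → ℝ) (θ : Θ) (q : Ω → ℝ) : ℝ :=
  ∑ ω, Dq μ θ q ω

/-- A feasible signal-representation for prior `pr`: a finitely supported distribution over
posteriors (each posterior being a distribution on `Ω`) averaging to the prior. -/
def FeasRep [Fintype Ω] (pr : Ω → ℝ) (x : (Ω → ℝ) →₀ ℝ) : Prop :=
  (∀ q ∈ x.support, IsDist q) ∧ (∀ q, 0 ≤ x q) ∧
  (∑ q ∈ x.support, x q = 1) ∧ ∀ ω, ∑ q ∈ x.support, x q * q ω = pr ω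

variable [Fintype Θ] [Fintype Ω] [Fintype A] [Nonempty A]

/-- Expected value `∑_q v_θ(D_θ q)·x(q)` that a type-`θ` buyer gets from
signal representation `x`. -/
def PMutil (u : Θ → Ω → A → ℝ) (μ : Ω → Θ → ℝ) (θ : Θ) (x : (Ω → ℝ) →₀ ℝ) : ℝ :=
  ∑ q ∈ x.support, vfun u θ (Dq μ θ q) * x q

/-- Validity (IR and IC) of a Pricing Mappings menu `{(x_θ, t_θ)}`. -/
def PMvalid (u : Θ → Ω → A → ℝ) (μ : Ω → Θ → ℝ)
    (x : Θ → ((Ω → ℝ) →₀ ℝ)) (t : Θ → ℝ) : Prop :=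
  (∀ θ, FeasRep (margO μ) (x θ)) ∧ (∀ θ, 0 ≤ t θ) ∧
  (∀ θ, vfun u θ (Dq μ θ (margO μ)) ≤ PMutil u μ θ (x θ) - margT μ θ * t θ) ∧
  (∀ θ θ', θ' ≠ θ →
    PMutil u μ θ (x θ') - margT μ θ * t θ' ≤ PMutil u μ θ (x θ) - margT μ θ * t θ)

/-- Revenue `∑_θ μ(θ)·t_θ` of a Pricing Mappings menu. -/
def PMrev (μ : Ω → Θ → ℝ) (t : Θ → ℝ) : ℝ := ∑ θ, margT μ θ * t θ

/-- `R_c(u,μ)`: the supremum of revenues of valid Pricing Mappings menus. -/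
def Rc (u : Θ → Ω → A → ℝ) (μ : Ω → Θ → ℝ) : ℝ :=
  sSup {r | ∃ x t, PMvalid u μ x t ∧ r = PMrev μ t}

/-- Net utility `∑_q [v_θ(D_θ q)·x(q) − (1ᵀD_θ q)·t̃(q)]` of a type-`θ` buyer
from a Pricing Outcomes contract `(x, tt)`. -/
def POutil (u : Θ → Ω → A → ℝ) (μ : Ω → Θ → ℝ) (θ : Θ)
    (x tt : (Ω → ℝ) →₀ ℝ) : ℝ :=
  ∑ q ∈ x.support ∪ tt.support,
    (vfun u θ (Dq μ θ q) * x q - onesD μ θ q * tt q)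

/-- Validity (feasibility, payments supported on signals, IR and IC) of a Pricing Outcomes
menu `{(x_θ, t̃_θ)}`. -/
def POvalid (u : Θ → Ω → A → ℝ) (μ : Ω → Θ → ℝ)
    (x tt : Θ → ((Ω → ℝ) →₀ ℝ)) : Prop :=
  (∀ θ, FeasRep (margO μ) (x θ)) ∧ (∀ θ, (tt θ).support ⊆ (x θ).support) ∧
  (∀ θ, vfun u θ (Dq μ θ (margO μ)) ≤ POutil u μ θ (x θ) (tt θ)) ∧
  (∀ θ θ', θ' ≠ θ →
    POutil u μ θ (x θ') (tt θ') ≤ POutil u μ θ (x θ) (tt θ))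

/-- Revenue `∑_θ ∑_q (1ᵀD_θ q)·t̃_θ(q)` of a Pricing Outcomes menu. -/
def POrev (μ : Ω → Θ → ℝ) (tt : Θ → ((Ω → ℝ) →₀ ℝ)) : ℝ :=
  ∑ θ, ∑ q ∈ (tt θ).support, onesD μ θ q * tt θ q

/-- `R(u,μ)`: the supremum of revenues of valid Pricing Outcomes menus. -/
def Rfull (u : Θ → Ω → A → ℝ) (μ : Ω → Θ → ℝ) : ℝ :=
  sSup {r | ∃ x tt, POvalid u μ x tt ∧ r = POrev μ tt}

/-- `R_p(u,μ)`: the supremum of revenues of valid Pricing Outcomes menus with no positive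
transfers to the buyer, i.e. all payments nonnegative. -/
def Rp (u : Θ → Ω → A → ℝ) (μ : Ω → Θ → ℝ) : ℝ :=
  sSup {r | ∃ x tt, POvalid u μ x tt ∧ (∀ θ q, 0 ≤ tt θ q) ∧ r = POrev μ tt}

/-- `max_a u(θ,ω,a)`. -/
def maxU (u : Θ → Ω → A → ℝ) (θ : Θ) (ω : Ω) : ℝ :=
  univ.sup' univ_nonempty fun a => u θ ω a

/-- The buyer surplus
`σ(θ) = ∑_ω μ(ω|θ)·max_a u(θ,ω,a) − max_a ∑_ω μ(ω|θ)·u(θ,ω,a)`. -/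
def surplus (u : Θ → Ω → A → ℝ) (μ : Ω → Θ → ℝ) (θ : Θ) : ℝ :=
  ∑ ω, μ ω θ / margT μ θ * maxU u θ ω -
    univ.sup' univ_nonempty fun a => ∑ ω, μ ω θ / margT μ θ * u θ ω a

/-- The full surplus `∑_θ μ(θ)·σ(θ)`. -/
def fullSurplus (u : Θ → Ω → A → ℝ) (μ : Ω → Θ → ℝ) : ℝ :=
  ∑ θ, margT μ θ * surplus u μ θ

/-- The sealed-envelope revenue `R_e(u,μ) = sup_{t ≥ 0} t·∑_{θ : μ(θ)>0, σ(θ) ≥ t} μ(θ)`. -/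
def Re (u : Θ → Ω → A → ℝ) (μ : Ω → Θ → ℝ) : ℝ :=
  sSup {r | ∃ t : ℝ, 0 ≤ t ∧
    r = t * ∑ θ, (if 0 < margT μ θ ∧ t ≤ surplus u μ θ then margT μ θ else 0)}

/-- The cell of the simplex on which, for each type `θ`, action `α θ` is optimal:
on this polytope every `v_θ` is linear. -/
def cellPM (u : Θ → Ω → A → ℝ) (α : Θ → A) : Set (Ω → ℝ) :=
  {q | IsDist q ∧ ∀ θ a, ∑ ω, q ω * u θ ω a ≤ ∑ ω, q ω * u θ ω (α θ)}

/-- `Q*(u)`: the set of vertices (extreme points) of the cells of the partition of the simplex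
into polytopes on which every `v_θ` is linear. -/
def Qstar (u : Θ → Ω → A → ℝ) : Set (Ω → ℝ) :=
  ⋃ α : Θ → A, Set.extremePoints ℝ (cellPM u α)

/-- The cell of the simplex on which, for each type `θ`, action `α θ` is optimal for the
transformed posterior `D_θ q`: on this polytope every `q ↦ v_θ(D_θ q)` is linear. -/
def cellPO (u : Θ → Ω → A → ℝ) (μ : Ω → Θ → ℝ) (α : Θ → A) : Set (Ω → ℝ) :=
  {q | IsDist q ∧ ∀ θ a, ∑ ω, Dq μ θ q ω * u θ ω a ≤ ∑ ω, Dq μ θ q ω * u θ ω (α θ)}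

/-- `Q*(u,μ)`: the set of vertices (extreme points) of the cells of the partition of the simplex
into polytopes on which every `q ↦ v_θ(D_θ q)` is linear. -/
def QstarD (u : Θ → Ω → A → ℝ) (μ : Ω → Θ → ℝ) : Set (Ω → ℝ) :=
  ⋃ α : Θ → A, Set.extremePoints ℝ (cellPO u μ α)

/-- The point mass at `ω`, as an element of `Δ(Ω)`. -/
def deltaP [DecidableEq Ω] (ω : Ω) : Ω → ℝ := fun ω' => if ω' = ω then 1 else 0

/-- The full-revelation signal representation: posterior `δ_ω` with probability `μ(ω)`. -/
def fullX [DecidableEq Ω] (μ : Ω → Θ → ℝ) : (Ω → ℝ) →₀ ℝ :=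
  ∑ ω, Finsupp.single (deltaP ω) (margO μ ω)

/-- The full-revelation payment function: `t̃(δ_ω) = μ(ω)·t(ω)`. -/
def fullT [DecidableEq Ω] (μ : Ω → Θ → ℝ) (t : Ω → ℝ) : (Ω → ℝ) →₀ ℝ :=
  ∑ ω, Finsupp.single (deltaP ω) (margO μ ω * t ω)


section AuxPM
variable {Θ Ω A : Type*} [Fintype Θ] [Fintype Ω] [Fintype A] [Nonempty A]

lemma sup'_const_mul {ι : Type*} {s : Finset ι} (H : s.Nonempty) (f : ι → ℝ) {c : ℝ} (hc : 0 ≤ c) :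
    s.sup' H (fun a => c * f a) = c * s.sup' H f := by
  apply le_antisymm
  · exact Finset.sup'_le _ _ fun a ha => mul_le_mul_of_nonneg_left (Finset.le_sup' f ha) hc
  · obtain ⟨a, ha, hEq⟩ := Finset.exists_mem_eq_sup' H f
    rw [hEq]; exact Finset.le_sup' (fun a => c * f a) ha

lemma vfun_smul (u : Θ → Ω → A → ℝ) (θ : Θ) (q : Ω → ℝ) {c : ℝ} (hc : 0 ≤ c) :
    vfun u θ (fun ω => c * q ω) = c * vfun u θ q := by
  unfold vfun
  rw [← sup'_const_mul _ _ hc]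
  congr 1; funext a
  rw [Finset.mul_sum]; congr 1; funext ω; ring

lemma vfun_eq_on_cell {u : Θ → Ω → A → ℝ} {α : Θ → A} (θ : Θ) {q : Ω → ℝ} (h : q ∈ cellPM u α) :
    vfun u θ q = ∑ ω, q ω * u θ ω (α θ) := by
  apply le_antisymm
  · exact Finset.sup'_le _ _ fun a _ => h.2 θ a
  · exact Finset.le_sup' (fun a => ∑ ω, q ω * u θ ω a) (Finset.mem_univ (α θ))

lemma extreme_perturb {u : Θ → Ω → A → ℝ} {α : Θ → A} {q : Ω → ℝ}
    (hq : q ∈ Set.extremePoints ℝ (cellPM u α)) {d : Ω → ℝ}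
    (h1 : ∑ ω, d ω = 0) (h2 : ∀ ω, q ω = 0 → d ω = 0)
    (h3 : ∀ θ a, (∑ ω, q ω * u θ ω a = ∑ ω, q ω * u θ ω (α θ)) →
      ∑ ω, d ω * u θ ω a = ∑ ω, d ω * u θ ω (α θ)) : d = 0 := by
  classical
  by_contra hd
  obtain ⟨hqmem, hqext⟩ := hq
  set c1 : Ω → ℝ := fun ω => if q ω ≤ 0 ∨ d ω = 0 then 1 else q ω / |d ω| with hc1
  set c2 : Θ × A → ℝ := fun p =>
    if (∑ ω, q ω * u p.1 ω (α p.1) - ∑ ω, q ω * u p.1 ω p.2) ≤ 0 ∨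
       (∑ ω, d ω * u p.1 ω p.2 - ∑ ω, d ω * u p.1 ω (α p.1)) = 0 then 1
    else (∑ ω, q ω * u p.1 ω (α p.1) - ∑ ω, q ω * u p.1 ω p.2) /
      |∑ ω, d ω * u p.1 ω p.2 - ∑ ω, d ω * u p.1 ω (α p.1)| with hc2
  set S : Finset ℝ := insert 1 (Finset.univ.image c1 ∪ Finset.univ.image c2) with hS
  have hSne : S.Nonempty := ⟨1, by simp [hS]⟩
  set ε := S.min' hSne with hε
  have hεpos : 0 < ε := by
    rw [hε, Finset.lt_min'_iff]
    intro y hy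
    rw [hS, Finset.mem_insert, Finset.mem_union] at hy
    rcases hy with rfl | hy | hy
    · norm_num
    · obtain ⟨ω, -, rfl⟩ := Finset.mem_image.1 hy
      simp only [hc1]
      by_cases h : q ω ≤ 0 ∨ d ω = 0
      · rw [if_pos h]; norm_num
      · rw [if_neg h]
        push_neg at h
        exact div_pos h.1 (abs_pos.2 h.2)
    · obtain ⟨p, -, rfl⟩ := Finset.mem_image.1 hy
      simp only [hc2]
      by_cases h : (∑ ω, q ω * u p.1 ω (α p.1) - ∑ ω, q ω * u p.1 ω p.2) ≤ 0 ∨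
       (∑ ω, d ω * u p.1 ω p.2 - ∑ ω, d ω * u p.1 ω (α p.1)) = 0
      · rw [if_pos h]; norm_num
      · rw [if_neg h]
        push_neg at h
        exact div_pos h.1 (abs_pos.2 h.2)
  have key : ∀ s : ℝ, |s| ≤ ε → (fun ω => q ω + s * d ω) ∈ cellPM u α := by
    intro s hs
    have hsabs : ∀ (x : ℝ), x ∈ S → |s| ≤ x := fun x hx => hs.trans (Finset.min'_le _ _ hx)
    refine ⟨⟨fun ω => ?_, ?_⟩, fun θ a => ?_⟩
    · show 0 ≤ q ω + s * d ω
      by_cases h0 : q ω ≤ 0 ∨ d ω = 0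
      · rcases h0 with h0 | h0
        · have hq0 : q ω = 0 := le_antisymm h0 (hqmem.1.1 ω)
          simp [hq0, h2 ω hq0]
        · simpa [h0] using hqmem.1.1 ω
      · push_neg at h0
        have hcmem : c1 ω ∈ S := by
          rw [hS, Finset.mem_insert, Finset.mem_union]
          exact Or.inr (Or.inl (Finset.mem_image.2 ⟨ω, Finset.mem_univ ω, rfl⟩))
        have hεc : |s| ≤ q ω / |d ω| := by
          have h' := hsabs _ hcmem
          simp only [hc1] at h'
          rwa [if_neg (not_or.2 ⟨not_le.2 h0.1, h0.2⟩)] at h'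
        have hd0 : 0 < |d ω| := abs_pos.2 h0.2
        have habs : |s * d ω| ≤ q ω := by
          rw [abs_mul]
          calc |s| * |d ω| ≤ (q ω / |d ω|) * |d ω| := by gcongr
          _ = q ω := div_mul_cancel₀ _ hd0.ne'
        nlinarith [neg_abs_le (s * d ω)]
    · have hsum : ∑ ω, (q ω + s * d ω) = ∑ ω, q ω + s * ∑ ω, d ω := by
        rw [Finset.sum_add_distrib, Finset.mul_sum]
      rw [hsum, h1, hqmem.1.2]; ring
    · have hbase := hqmem.2 θ a
      have main : s * (∑ ω, d ω * u θ ω a - ∑ ω, d ω * u θ ω (α θ)) ≤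
          ∑ ω, q ω * u θ ω (α θ) - ∑ ω, q ω * u θ ω a := by
        by_cases hz : (∑ ω, q ω * u θ ω (α θ) - ∑ ω, q ω * u θ ω a) ≤ 0 ∨
            (∑ ω, d ω * u θ ω a - ∑ ω, d ω * u θ ω (α θ)) = 0
        · rcases hz with hz | hz
          · have h30 := h3 θ a (by linarith)
            have hg0 : (∑ ω, d ω * u θ ω a - ∑ ω, d ω * u θ ω (α θ)) = 0 := by linarith
            rw [hg0, mul_zero]; linarith
          · rw [hz, mul_zero]; linarith
        · push_neg at hz
          have hcmem : c2 (θ, a) ∈ S := by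
            rw [hS, Finset.mem_insert, Finset.mem_union]
            exact Or.inr (Or.inr (Finset.mem_image.2 ⟨(θ, a), Finset.mem_univ _, rfl⟩))
          have hle := hsabs _ hcmem
          simp only [hc2] at hle
          rw [if_neg (not_or.2 ⟨not_le.2 (by linarith [hz.1]), hz.2⟩)] at hle
          have hgpos : 0 < |∑ ω, d ω * u θ ω a - ∑ ω, d ω * u θ ω (α θ)| := abs_pos.2 hz.2
          calc s * (∑ ω, d ω * u θ ω a - ∑ ω, d ω * u θ ω (α θ))
              ≤ |s * (∑ ω, d ω * u θ ω a - ∑ ω, d ω * u θ ω (α θ))| := le_abs_self _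
          _ = |s| * |∑ ω, d ω * u θ ω a - ∑ ω, d ω * u θ ω (α θ)| := abs_mul _ _
          _ ≤ ((∑ ω, q ω * u θ ω (α θ) - ∑ ω, q ω * u θ ω a) /
                |∑ ω, d ω * u θ ω a - ∑ ω, d ω * u θ ω (α θ)|) *
              |∑ ω, d ω * u θ ω a - ∑ ω, d ω * u θ ω (α θ)| := by gcongr
          _ = _ := div_mul_cancel₀ _ hgpos.ne'
      have expand : ∀ b, ∑ ω, (q ω + s * d ω) * u θ ω b =
          ∑ ω, q ω * u θ ω b + s * ∑ ω, d ω * u θ ω b := by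
        intro b; rw [Finset.mul_sum, ← Finset.sum_add_distrib]
        congr 1; funext ω; ring
      rw [expand, expand]; linarith [main]
  have hplus := key ε (by rw [abs_of_pos hεpos])
  have hminus := key (-ε) (by rw [abs_neg, abs_of_pos hεpos])
  have hmid : q ∈ openSegment ℝ (fun ω => q ω + ε * d ω) (fun ω => q ω + (-ε) * d ω) := by
    refine ⟨1/2, 1/2, by norm_num, by norm_num, by norm_num, ?_⟩
    funext ω
    simp only [Pi.add_apply, Pi.smul_apply, smul_eq_mul]
    ring
  have hEq := hqext hplus hminus hmid
  apply hd
  funext ω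
  have h := congrFun hEq ω
  have : ε * d ω = 0 := by linarith [h]
  simpa [hεpos.ne'] using this

lemma extremePoints_cell_finite (u : Θ → Ω → A → ℝ) (α : Θ → A) :
    (Set.extremePoints ℝ (cellPM u α)).Finite := by
  classical
  have hinj : Set.InjOn (fun q : Ω → ℝ =>
      ((Finset.univ.filter fun ω => q ω = 0),
       (Finset.univ.filter fun p : Θ × A =>
         ∑ ω, q ω * u p.1 ω p.2 = ∑ ω, q ω * u p.1 ω (α p.1))))
      (Set.extremePoints ℝ (cellPM u α)) := by
    intro q hq q' hq' hEq
    simp only [Prod.mk.injEq] at hEq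
    have hz : ∀ ω, q ω = 0 ↔ q' ω = 0 := by
      intro ω
      constructor <;> intro h
      · have := hEq.1 ▸ (Finset.mem_filter.2 ⟨Finset.mem_univ ω, h⟩)
        exact (Finset.mem_filter.1 this).2
      · have := hEq.1.symm ▸ (Finset.mem_filter.2 ⟨Finset.mem_univ ω, h⟩)
        exact (Finset.mem_filter.1 this).2
    have hact : ∀ θ a, (∑ ω, q ω * u θ ω a = ∑ ω, q ω * u θ ω (α θ)) ↔
        (∑ ω, q' ω * u θ ω a = ∑ ω, q' ω * u θ ω (α θ)) := by
      intro θ a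
      constructor <;> intro h
      · have := hEq.2 ▸ (Finset.mem_filter.2 ⟨Finset.mem_univ (θ, a), h⟩)
        exact (Finset.mem_filter.1 this).2
      · have := hEq.2.symm ▸ (Finset.mem_filter.2 ⟨Finset.mem_univ (θ, a), h⟩)
        exact (Finset.mem_filter.1 this).2
    have hd : (fun ω => q ω - q' ω) = 0 := by
      apply extreme_perturb hq
      · rw [Finset.sum_sub_distrib, (hq.1 : q ∈ cellPM u α).1.2,
          (hq'.1 : q' ∈ cellPM u α).1.2, sub_self]
      · intro ω h0
        rw [h0, (hz ω).1 h0, sub_self]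
      · intro θ a h
        have h' := (hact θ a).1 h
        have e1 : ∀ b, ∑ ω, (q ω - q' ω) * u θ ω b =
            ∑ ω, q ω * u θ ω b - ∑ ω, q' ω * u θ ω b := by
          intro b; rw [← Finset.sum_sub_distrib]; congr 1; funext ω; ring
        rw [e1, e1, h, h']
    funext ω
    have := congrFun hd ω
    simpa [sub_eq_zero] using this
  have : ((fun q : Ω → ℝ =>
      ((Finset.univ.filter fun ω => q ω = 0),
       (Finset.univ.filter fun p : Θ × A =>
         ∑ ω, q ω * u p.1 ω p.2 = ∑ ω, q ω * u p.1 ω (α p.1)))) ''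
      (Set.extremePoints ℝ (cellPM u α))).Finite := Set.toFinite _
  exact Set.Finite.of_finite_image this hinj

lemma extremePoints_cell_rat (u : Θ → Ω → A → ℝ) (α : Θ → A)
    (hu : ∀ θ ω a, ∃ r : ℚ, u θ ω a = (r : ℝ)) {q : Ω → ℝ}
    (hq : q ∈ Set.extremePoints ℝ (cellPM u α)) (ω₀ : Ω) : ∃ r : ℚ, q ω₀ = (r : ℝ) := by
  classical
  by_contra hirr
  set K : Submodule ℚ ℝ := Submodule.span ℚ {(1 : ℝ)} with hK
  have hratK : ∀ r : ℚ, ((r : ℝ) : ℝ) ∈ K := by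
    intro r
    rw [hK]
    have h1 : (r : ℝ) = r • (1 : ℝ) := by rw [Rat.smul_one_eq_cast]
    rw [h1]
    exact Submodule.smul_mem _ _ (Submodule.mem_span_singleton_self _)
  have hq0K : q ω₀ ∉ K := by
    intro h
    rw [hK, Submodule.mem_span_singleton] at h
    obtain ⟨r, hr⟩ := h
    exact hirr ⟨r, by rw [← hr, Rat.smul_one_eq_cast]⟩
  have hv0 : (Submodule.Quotient.mk (q ω₀) : ℝ ⧸ K) ≠ 0 :=
    fun h => hq0K ((Submodule.Quotient.mk_eq_zero K).1 h)
  obtain ⟨φ, hφ⟩ : ∃ φ : Module.Dual ℚ (ℝ ⧸ K), φ (Submodule.Quotient.mk (q ω₀)) ≠ 0 := by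
    by_contra h
    push_neg at h
    exact hv0 ((Module.forall_dual_apply_eq_zero_iff ℚ _).1 h)
  set ψ : ℝ →ₗ[ℚ] ℚ := φ.comp (K.mkQ) with hψ
  have hψapp : ∀ x : ℝ, ψ x = φ (Submodule.Quotient.mk x) := by
    intro x; rw [hψ]; simp [Submodule.mkQ_apply]
  have hψrat : ∀ r : ℚ, ψ (r : ℝ) = 0 := by
    intro r
    rw [hψapp, (Submodule.Quotient.mk_eq_zero K).2 (hratK r), map_zero]
  have hψmul : ∀ (r : ℚ) (x : ℝ), ψ ((r : ℝ) * x) = r * ψ x := by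
    intro r x
    have h1 : (r : ℝ) * x = r • x := (Rat.smul_def r x).symm
    rw [h1, map_smul, smul_eq_mul]
  set d : Ω → ℝ := fun ω => ((ψ (q ω) : ℚ) : ℝ) with hdd
  have hd0 : d ≠ 0 := by
    intro h
    have h2 := congrFun h ω₀
    simp only [hdd, Pi.zero_apply, Rat.cast_eq_zero] at h2
    rw [hψapp] at h2
    exact hφ h2
  apply hd0
  apply extreme_perturb hq
  · have h3 : ∑ ω, d ω = ((∑ ω, ψ (q ω) : ℚ) : ℝ) := by rw [Rat.cast_sum]
    rw [h3, ← map_sum, hq.1.1.2]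
    rw [show ((1 : ℝ)) = ((1 : ℚ) : ℝ) by norm_num, hψrat]
    norm_num
  · intro ω h0
    simp [hdd, h0, show ψ 0 = 0 from map_zero ψ]
  · intro θ a hact
    have key : ∀ b, ∑ ω, d ω * u θ ω b = ((ψ (∑ ω, q ω * u θ ω b) : ℚ) : ℝ) := by
      intro b
      rw [map_sum, Rat.cast_sum]
      congr 1; funext ω
      obtain ⟨r, hr⟩ := hu θ ω b
      rw [hr, mul_comm (q ω), hψmul]
      push_cast
      rw [hdd]; ring
    rw [key, key, hact]

lemma cellPM_convex (u : Θ → Ω → A → ℝ) (α : Θ → A) : Convex ℝ (cellPM u α) := by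
  intro x hx y hy a b ha hb hab
  have happ : ∀ ω, (a • x + b • y) ω = a * x ω + b * y ω := fun ω => by
    simp [smul_eq_mul]
  have hexp : ∀ (θ : Θ) (c : A), ∑ ω, (a • x + b • y) ω * u θ ω c =
      a * ∑ ω, x ω * u θ ω c + b * ∑ ω, y ω * u θ ω c := by
    intro θ c
    simp only [happ]
    rw [Finset.mul_sum, Finset.mul_sum, ← Finset.sum_add_distrib]
    congr 1; funext ω; ring
  refine ⟨⟨fun ω => ?_, ?_⟩, fun θ c => ?_⟩
  · rw [happ]
    exact add_nonneg (mul_nonneg ha (hx.1.1 ω)) (mul_nonneg hb (hy.1.1 ω))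
  · simp only [happ]
    rw [Finset.sum_add_distrib, ← Finset.mul_sum, ← Finset.mul_sum, hx.1.2, hy.1.2]
    linarith
  · rw [hexp, hexp]
    exact add_le_add (mul_le_mul_of_nonneg_left (hx.2 θ c) ha)
      (mul_le_mul_of_nonneg_left (hy.2 θ c) hb)

lemma cellPM_isCompact (u : Θ → Ω → A → ℝ) (α : Θ → A) : IsCompact (cellPM u α) := by
  have hsub : cellPM u α ⊆ stdSimplex ℝ Ω := fun q hq => ⟨hq.1.1, hq.1.2⟩
  have hclosed : IsClosed (cellPM u α) := by
    have hEq : cellPM u α = stdSimplex ℝ Ω ∩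
        ⋂ θ, ⋂ a, {q : Ω → ℝ | ∑ ω, q ω * u θ ω a ≤ ∑ ω, q ω * u θ ω (α θ)} := by
      ext q
      simp only [cellPM, IsDist, stdSimplex, Set.mem_setOf_eq, Set.mem_inter_iff,
        Set.mem_iInter]
    rw [hEq]
    refine IsClosed.inter (isClosed_stdSimplex _ _)
      (isClosed_iInter fun θ => isClosed_iInter fun a => isClosed_le ?_ ?_) <;>
      exact continuous_finset_sum _ fun ω _ => (continuous_apply ω).mul continuous_const
  exact (isCompact_stdSimplex _ _).of_isClosed_subset hclosed hsub

lemma cellPM_eq_hull (u : Θ → Ω → A → ℝ) (α : Θ → A) :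
    cellPM u α = convexHull ℝ (Set.extremePoints ℝ (cellPM u α)) := by
  have h := closure_convexHull_extremePoints (cellPM_isCompact u α) (cellPM_convex u α)
  rw [← ((extremePoints_cell_finite u α).isCompact_convexHull ℝ).isClosed.closure_eq]
  exact h.symm

lemma decomp (u : Θ → Ω → A → ℝ) {q : Ω → ℝ} (hq : IsDist q) :
    ∃ w : (Ω → ℝ) →₀ ℝ, (∀ p, 0 ≤ w p) ∧ (∀ p ∈ w.support, p ∈ Qstar u) ∧
      (∀ p ∈ w.support, IsDist p) ∧ (∑ p ∈ w.support, w p = 1) ∧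
      (∀ ω, ∑ p ∈ w.support, w p * p ω = q ω) ∧
      (∀ θ, ∑ p ∈ w.support, w p * vfun u θ p = vfun u θ q) := by
  classical
  have hα : ∀ θ : Θ, ∃ a, (univ.sup' univ_nonempty fun a => ∑ ω, q ω * u θ ω a)
      = ∑ ω, q ω * u θ ω a := by
    intro θ
    obtain ⟨a, _, h⟩ := Finset.exists_mem_eq_sup' univ_nonempty (fun a => ∑ ω, q ω * u θ ω a)
    exact ⟨a, h⟩
  choose α hαs using hα
  have hqc : q ∈ cellPM u α := by
    refine ⟨hq, fun θ a => ?_⟩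
    rw [← hαs θ]
    exact Finset.le_sup' (fun a => ∑ ω, q ω * u θ ω a) (Finset.mem_univ a)
  have hfin := extremePoints_cell_finite u α
  have hqhull : q ∈ convexHull ℝ (hfin.toFinset : Set (Ω → ℝ)) := by
    rw [Set.Finite.coe_toFinset]
    rw [cellPM_eq_hull u α] at hqc
    exact hqc
  rw [Finset.convexHull_eq] at hqhull
  obtain ⟨wf, hw0, hw1, hwc⟩ := hqhull
  set w : (Ω → ℝ) →₀ ℝ := Finsupp.onFinset hfin.toFinset
    (fun p => if p ∈ hfin.toFinset then wf p else 0)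
    (fun p h => by by_contra hp; simp [hp] at h) with hw
  have hwsupp : w.support ⊆ hfin.toFinset := Finsupp.support_onFinset_subset
  have hwapp : ∀ p, w p = if p ∈ hfin.toFinset then wf p else 0 := fun p => rfl
  have hwnn : ∀ p, 0 ≤ w p := by
    intro p
    rw [hwapp]
    split
    · exact hw0 p (by assumption)
    · exact le_refl 0
  have hmemE : ∀ p ∈ w.support, p ∈ Set.extremePoints ℝ (cellPM u α) := by
    intro p hp
    exact hfin.mem_toFinset.1 (hwsupp hp)
  have hsum_ext : ∀ f : (Ω → ℝ) → ℝ, ∑ p ∈ w.support, w p * f p =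
      ∑ p ∈ hfin.toFinset, wf p * f p := by
    intro f
    rw [Finset.sum_subset hwsupp]
    · exact Finset.sum_congr rfl fun p hp => by rw [hwapp, if_pos hp]
    · intro p hp hnp
      rw [Finsupp.notMem_support_iff.1 hnp, zero_mul]
  have hbary : ∀ ω, ∑ p ∈ hfin.toFinset, wf p * p ω = q ω := by
    intro ω
    rw [Finset.centerMass_eq_of_sum_1 _ id hw1] at hwc
    have h := congrFun hwc ω
    rw [Finset.sum_apply] at h
    simpa [smul_eq_mul] using h
  refine ⟨w, hwnn, ?_, ?_, ?_, ?_, ?_⟩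
  · intro p hp
    exact Set.mem_iUnion.2 ⟨α, hmemE p hp⟩
  · intro p hp
    exact ((extremePoints_subset (hmemE p hp)) : p ∈ cellPM u α).1
  · have h := hsum_ext (fun _ => 1)
    simpa using h.trans (by simpa using hw1)
  · intro ω
    rw [hsum_ext (fun p => p ω)]
    exact hbary ω
  · intro θ
    rw [hsum_ext (fun p => vfun u θ p)]
    have hlin : ∀ p ∈ hfin.toFinset, wf p * vfun u θ p =
        wf p * ∑ ω, p ω * u θ ω (α θ) := by
      intro p hp
      rw [vfun_eq_on_cell θ (extremePoints_subset (hfin.mem_toFinset.1 hp))]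
    rw [Finset.sum_congr rfl hlin, vfun_eq_on_cell θ hqc]
    calc ∑ p ∈ hfin.toFinset, wf p * ∑ ω, p ω * u θ ω (α θ)
        = ∑ p ∈ hfin.toFinset, ∑ ω, wf p * p ω * u θ ω (α θ) := by
          refine Finset.sum_congr rfl fun p _ => ?_
          rw [Finset.mul_sum]; congr 1; funext ω; ring
      _ = ∑ ω, ∑ p ∈ hfin.toFinset, wf p * p ω * u θ ω (α θ) := Finset.sum_comm
      _ = ∑ ω, q ω * u θ ω (α θ) := by
          refine Finset.sum_congr rfl fun ω _ => ?_
          rw [← Finset.sum_mul, hbary ω]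

lemma sum_support_finset_sum {ι : Type*} (g : (Ω → ℝ) → ℝ) (s : Finset ι)
    (c : ι → ℝ) (W : ι → ((Ω → ℝ) →₀ ℝ)) :
    ∑ p ∈ (∑ i ∈ s, c i • W i).support, g p * (∑ i ∈ s, c i • W i) p =
      ∑ i ∈ s, c i * ∑ p ∈ (W i).support, g p * W i p := by
  classical
  have h1 : ∀ y : (Ω → ℝ) →₀ ℝ, ∑ p ∈ y.support, g p * y p =
      y.sum (fun p m => g p * m) := fun y => rfl
  rw [h1]
  induction s using Finset.induction_on with
  | empty => simp
  | insert _ _ hnot ih =>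
    rename_i i s'
    rw [Finset.sum_insert hnot, Finset.sum_insert hnot,
      Finsupp.sum_add_index' (fun p => mul_zero (g p)) (fun p b₁ b₂ => mul_add (g p) b₁ b₂), ih,
      Finsupp.sum_smul_index (fun p => mul_zero (g p))]
    congr 1
    rw [Finsupp.sum, Finset.mul_sum]
    exact Finset.sum_congr rfl fun p _ => by ring

end AuxPM

/-- Interesting posteriors, independent case. `Q*(u)` is a finite set;
for every product distribution `μ` with positive `Ω`-marginal, any valid Pricing Mappings
menu can be replaced by one whose posteriors all lie in `Q*(u)` with at least the same
revenue; and if `u` is rational-valued then every element of `Q*(u)` has rational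
coordinates. -/
theorem interesting_posteriors_independent (u : Θ → Ω → A → ℝ) :
    (Qstar u).Finite ∧
    (∀ μ : Ω → Θ → ℝ, IsJoint μ →
      (∀ ω θ, μ ω θ = margO μ ω * margT μ θ) →
      (∀ ω, 0 < margO μ ω) →
      ∀ x t, PMvalid u μ x t →
        ∃ x' t', PMvalid u μ x' t' ∧
          (∀ θ, ∀ q ∈ (x' θ).support, q ∈ Qstar u) ∧
          PMrev μ t ≤ PMrev μ t') ∧
    ((∀ θ ω a, ∃ r : ℚ, u θ ω a = (r : ℝ)) →
      ∀ q ∈ Qstar u, ∀ ω, ∃ r : ℚ, q ω = (r : ℝ)) := by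
  classical
  refine ⟨Set.finite_iUnion (fun α => extremePoints_cell_finite u α), ?_, ?_⟩
  · intro μ hμ hprod hpos x t hvalid
    set W : (Ω → ℝ) → ((Ω → ℝ) →₀ ℝ) := fun q =>
      if h : IsDist q then Classical.choose (decomp u h) else 0 with hW
    have hWprop : ∀ q, IsDist q → ((∀ p, 0 ≤ W q p) ∧ (∀ p ∈ (W q).support, p ∈ Qstar u) ∧
        (∀ p ∈ (W q).support, IsDist p) ∧ (∑ p ∈ (W q).support, W q p = 1) ∧
        (∀ ω, ∑ p ∈ (W q).support, W q p * p ω = q ω) ∧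
        (∀ θ, ∑ p ∈ (W q).support, W q p * vfun u θ p = vfun u θ q)) := by
      intro q hq
      rw [hW]
      simp only [dif_pos hq]
      exact Classical.choose_spec (decomp u hq)
    set x' : Θ → ((Ω → ℝ) →₀ ℝ) := fun θ => ∑ q ∈ (x θ).support, (x θ) q • W q with hx'
    have hdist : ∀ θ, ∀ q ∈ (x θ).support, IsDist q := fun θ => (hvalid.1 θ).1
    have hL : ∀ (θ : Θ) (g : (Ω → ℝ) → ℝ), ∑ p ∈ (x' θ).support, g p * x' θ p =
        ∑ q ∈ (x θ).support, x θ q * ∑ p ∈ (W q).support, g p * W q p := by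
      intro θ g
      rw [hx']
      exact sum_support_finset_sum g _ _ _
    have hmargT : ∀ θ, 0 ≤ margT μ θ := fun θ => Finset.sum_nonneg fun ω _ => hμ.1 ω θ
    have hDq : ∀ (θ : Θ) (q : Ω → ℝ), Dq μ θ q = fun ω => margT μ θ * q ω := by
      intro θ q
      funext ω
      show μ ω θ / margO μ ω * q ω = margT μ θ * q ω
      rw [hprod ω θ, mul_comm (margO μ ω), mul_div_assoc, div_self (hpos ω).ne', mul_one]
    have hvD : ∀ (θ : Θ) (q : Ω → ℝ), vfun u θ (Dq μ θ q) = margT μ θ * vfun u θ q := by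
      intro θ q
      rw [hDq θ q, vfun_smul u θ q (hmargT θ)]
    have hPMeq : ∀ θ'' θ', PMutil u μ θ'' (x' θ') = PMutil u μ θ'' (x θ') := by
      intro θ'' θ'
      have e1 : PMutil u μ θ'' (x' θ') =
          ∑ p ∈ (x' θ').support, (fun p => vfun u θ'' (Dq μ θ'' p)) p * x' θ' p := rfl
      rw [e1, hL θ']
      refine Finset.sum_congr rfl fun q hq => ?_
      obtain ⟨-, -, -, -, -, h6⟩ := hWprop q (hdist θ' q hq)
      have e2 : ∑ p ∈ (W q).support, vfun u θ'' (Dq μ θ'' p) * W q p =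
          margT μ θ'' * ∑ p ∈ (W q).support, W q p * vfun u θ'' p := by
        rw [Finset.mul_sum]
        refine Finset.sum_congr rfl fun p _ => ?_
        rw [hvD]
        ring
      rw [e2, h6 θ'', ← hvD]
      ring
    have hsupp : ∀ θ, ∀ p ∈ (x' θ).support, p ∈ (⋃ q ∈ (x θ).support, ((W q).support : Set (Ω → ℝ))) := by
      intro θ p hp
      rw [hx'] at hp
      have := Finsupp.support_finset_sum hp
      obtain ⟨q, hq, hpq⟩ := Finset.mem_biUnion.1 this
      have hsub : (x θ q • W q).support ⊆ (W q).support := Finsupp.support_smul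
      exact Set.mem_biUnion hq (hsub hpq)
    have hfeas : ∀ θ, FeasRep (margO μ) (x' θ) := by
      intro θ
      obtain ⟨hd1, hd2, hd3, hd4⟩ := hvalid.1 θ
      refine ⟨?_, ?_, ?_, ?_⟩
      · intro p hp
        obtain ⟨q, hq, hpq⟩ := Set.mem_iUnion₂.1 (hsupp θ p hp)
        exact (hWprop q (hdist θ q hq)).2.2.1 p hpq
      · intro p
        rw [hx', Finsupp.finset_sum_apply]
        refine Finset.sum_nonneg fun q hq => ?_
        rw [Finsupp.smul_apply, smul_eq_mul]
        exact mul_nonneg (hd2 q) ((hWprop q (hdist θ q hq)).1 p)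
      · have h1 : ∑ p ∈ (x' θ).support, x' θ p =
            ∑ p ∈ (x' θ).support, (fun _ => (1:ℝ)) p * x' θ p := by
          simp
        rw [h1, hL θ]
        rw [show ∑ q ∈ (x θ).support, x θ q * ∑ p ∈ (W q).support, (fun _ => (1:ℝ)) p * W q p
            = ∑ q ∈ (x θ).support, x θ q from Finset.sum_congr rfl fun q hq => by
          simp only [one_mul]
          rw [(hWprop q (hdist θ q hq)).2.2.2.1, mul_one]]
        exact hd3
      · intro ω
        have h1 : ∑ p ∈ (x' θ).support, x' θ p * p ω =
            ∑ p ∈ (x' θ).support, (fun p => p ω) p * x' θ p :=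
          Finset.sum_congr rfl fun p _ => mul_comm _ _
        rw [h1, hL θ]
        rw [show ∑ q ∈ (x θ).support, x θ q * ∑ p ∈ (W q).support, (fun p => p ω) p * W q p
            = ∑ q ∈ (x θ).support, x θ q * q ω from Finset.sum_congr rfl fun q hq => by
          rw [show ∑ p ∈ (W q).support, (fun p => p ω) p * W q p
              = ∑ p ∈ (W q).support, W q p * p ω from
            Finset.sum_congr rfl fun p _ => mul_comm _ _,
            (hWprop q (hdist θ q hq)).2.2.2.2.1 ω]]
        exact hd4 ω
    refine ⟨x', t, ⟨hfeas, hvalid.2.1, ?_, ?_⟩, ?_, le_refl _⟩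
    · intro θ
      rw [hPMeq θ θ]
      exact hvalid.2.2.1 θ
    · intro θ θ' hne
      rw [hPMeq θ θ', hPMeq θ θ]
      exact hvalid.2.2.2 θ θ' hne
    · intro θ p hp
      obtain ⟨q, hq, hpq⟩ := Set.mem_iUnion₂.1 (hsupp θ p hp)
      exact (hWprop q (hdist θ q hq)).2.1 p hpq
  · intro hu q hq ω
    obtain ⟨α, hα⟩ := Set.mem_iUnion.1 hq
    exact extremePoints_cell_rat u α hu hα ω
end
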